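/- Let α, k be positive integers, p prime, and F ⊆ 2^[n] a kφ(p^α)-wise p^α-divisible family, where φ is Euler's totient function. Let V be the F_p-span of the characteristic vectors of F. If v ∈ V^⟨k⟩ has all coordinates in {0,1}, then the support of v has cardinality divisible by p^α. -/

import Mathlib

open Submodule

/-- The (Schur / coordinatewise) product of two subspaces of `Fin n → K`. -/
def schurMul {K : Type*} [CommRing K] {n : ℕ} (C D : Submodule K (Fin n → K)) :
    Submodule K (Fin n → K) :=
  Submodule.span K {x | ∃ c ∈ C, ∃ d ∈ D, x = c * d}

/-- `schurPow C k` is the `(k+1)`-st Schur power `C^⟨k+1⟩`; so `schurPow C 0 = C^⟨1⟩ = C`. -/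
def schurPow {K : Type*} [CommRing K] {n : ℕ} (C : Submodule K (Fin n → K)) :
    ℕ → Submodule K (Fin n → K)
  | 0 => C
  | k + 1 => schurMul (schurPow C k) C

/-- The stabiliser `St(E) = {x : x * E ⊆ E}` of a subspace, itself a subspace. -/
def stab {K : Type*} [CommRing K] {n : ℕ} (E : Submodule K (Fin n → K)) :
    Submodule K (Fin n → K) where
  carrier := {x | ∀ e ∈ E, x * e ∈ E}
  add_mem' := fun {a b} ha hb e he => by simpa [add_mul] using E.add_mem (ha e he) (hb e he)
  zero_mem' := fun e he => by simp
  smul_mem' := fun c {x} hx e he => by simpa [smul_mul_assoc] using E.smul_mem c (hx e he)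

/-- Support of a subspace of `Fin n → K`. -/
def suppS {K : Type*} [CommRing K] {n : ℕ} (C : Submodule K (Fin n → K)) : Set (Fin n) :=
  {i | ∃ v ∈ C, v i ≠ 0}

/-- Characteristic vector of a finite set. -/
def charVec (R : Type*) [Zero R] [One R] {n : ℕ} (A : Finset (Fin n)) : Fin n → R :=
  fun i => if i ∈ A then 1 else 0

/-- `𝓕` is `k`-wise `ℓ`-divisible: every intersection of `k` (not necessarily distinct)
members of `𝓕` has cardinality divisible by `ℓ`. -/
def kWiseDiv (n k ℓ : ℕ) (𝓕 : Finset (Finset (Fin n))) : Prop :=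
  ∀ A : Fin k → Finset (Fin n), (∀ i, A i ∈ 𝓕) → ℓ ∣ (Finset.univ.inf A).card

/-- Support of a set family. -/
def famSupp {n : ℕ} (ℱ : Set (Finset (Fin n))) : Set (Fin n) :=
  ⋃ B ∈ ℱ, (B : Set (Fin n))

/-- `A` is an atom of the family `ℱ`: a nonempty subset of the support such that every
member of `ℱ` contains `A` or is disjoint from it, maximal with this property. -/
def IsAtomOf {n : ℕ} (ℱ : Set (Finset (Fin n))) (A : Finset (Fin n)) : Prop :=
  A.Nonempty ∧ (A : Set (Fin n)) ⊆ famSupp ℱ ∧ (∀ B ∈ ℱ, A ⊆ B ∨ Disjoint A B) ∧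
    ∀ A' : Finset (Fin n), A ⊆ A' → (A' : Set (Fin n)) ⊆ famSupp ℱ →
      (∀ B ∈ ℱ, A' ⊆ B ∨ Disjoint A' B) → A' = A

/-- The family `ℱ^r` of all `r`-fold intersections of members of `ℱ`. -/
def interFam {n : ℕ} (ℱ : Set (Finset (Fin n))) (r : ℕ) : Set (Finset (Fin n)) :=
  {S | ∃ f : Fin r → Finset (Fin n), (∀ i, f i ∈ ℱ) ∧ S = Finset.univ.inf f}

/-- The linear map sending `v` to its restriction (indicator) on a coordinate set `S`. -/
noncomputable def indicatorMapL {K : Type*} [CommRing K] {n : ℕ} (S : Set (Fin n)) :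
    (Fin n → K) →ₗ[K] (Fin n → K) where
  toFun v := S.indicator v
  map_add' a b := by
    funext i; by_cases h : i ∈ S <;> simp [Set.indicator_apply, h]
  map_smul' c a := by
    funext i; by_cases h : i ∈ S <;> simp [Set.indicator_apply, h]

/-- Restriction (projection) of a subspace `V` to the coordinates in `S`. -/
noncomputable def restrTo {K : Type*} [CommRing K] {n : ℕ} (S : Set (Fin n))
    (V : Submodule K (Fin n → K)) : Submodule K (Fin n → K) :=
  V.map (indicatorMapL S)

open Finset Pointwise
lemma charVec_mul' {K : Type*} [CommRing K] {n : ℕ} (A B : Finset (Fin n)) :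
    charVec K A * charVec K B = charVec K (A ∩ B) := by
  funext i
  by_cases hA : i ∈ A <;> by_cases hB : i ∈ B <;>
    simp [charVec, hA, hB, Finset.mem_inter, Pi.mul_apply]

lemma schurMul_eq' {K : Type*} [CommRing K] {n : ℕ} (C D : Submodule K (Fin n → K)) :
    schurMul C D = C * D := by
  rw [Submodule.mul_eq_span_mul_set, schurMul]
  congr 1
  ext x
  constructor
  · rintro ⟨c, hc, d, hd, rfl⟩; exact Set.mul_mem_mul hc hd
  · rintro ⟨c, hc, d, hd, rfl⟩; exact ⟨c, hc, d, hd, rfl⟩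

lemma inf_comp_equiv' {n : ℕ} {ι κ : Type*} [Fintype ι] [Fintype κ]
    (σ : ι ≃ κ) (f : κ → Finset (Fin n)) :
    Finset.univ.inf (f ∘ σ) = Finset.univ.inf f := by
  rw [show f ∘ σ = f ∘ ⇑σ.toEmbedding from rfl, ← Finset.inf_map,
    Finset.map_univ_equiv]

lemma inf_cons' {n m : ℕ} (B : Finset (Fin n)) (f : Fin m → Finset (Fin n)) :
    Finset.univ.inf (Fin.cons B f : Fin (m+1) → Finset (Fin n)) = B ⊓ Finset.univ.inf f := by
  ext i
  simp only [Finset.mem_inf, Finset.mem_univ, true_implies, Fin.forall_fin_succ,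
    Fin.cons_zero, Fin.cons_succ, Finset.mem_inter, Finset.inf_eq_inter]

lemma mem_interFam_one' {n : ℕ} {ℱ : Set (Finset (Fin n))} {B} (hB : B ∈ ℱ) :
    B ∈ interFam ℱ 1 :=
  ⟨fun _ => B, fun _ => hB, by simp [Finset.inf_const Finset.univ_nonempty]⟩

lemma interFam_inter' {n : ℕ} {ℱ : Set (Finset (Fin n))} {m : ℕ} {S B : Finset (Fin n)}
    (hS : S ∈ interFam ℱ m) (hB : B ∈ ℱ) : S ∩ B ∈ interFam ℱ (m+1) := by
  obtain ⟨f, hf, rfl⟩ := hS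
  refine ⟨Fin.cons B f, fun i => Fin.cases hB hf i, ?_⟩
  rw [inf_cons']
  exact (inf_comm _ _)

lemma schurPow_le_span' {K : Type*} [CommRing K] {n : ℕ} (ℱ : Set (Finset (Fin n))) :
    ∀ m : ℕ, schurPow (span K (charVec K '' ℱ)) m ≤ span K (charVec K '' interFam ℱ (m+1))
  | 0 => by
    apply Submodule.span_mono
    rintro x ⟨B, hB, rfl⟩
    exact ⟨B, mem_interFam_one' hB, rfl⟩
  | (m+1) => by
    rw [show schurPow (span K (charVec K '' ℱ)) (m+1)
        = schurMul (schurPow (span K (charVec K '' ℱ)) m) (span K (charVec K '' ℱ)) from rfl,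
      schurMul_eq']
    calc schurPow (span K (charVec K '' ℱ)) m * span K (charVec K '' ℱ)
        ≤ span K (charVec K '' interFam ℱ (m+1)) * span K (charVec K '' ℱ) :=
          mul_le_mul_left (schurPow_le_span' ℱ m) _
      _ = span K (charVec K '' interFam ℱ (m+1) * charVec K '' ℱ) :=
          Submodule.span_mul_span K _ _
      _ ≤ span K (charVec K '' interFam ℱ (m+2)) := by
          apply Submodule.span_mono
          rintro x ⟨-, ⟨S, hS, rfl⟩, -, ⟨B, hB, rfl⟩, rfl⟩
          exact ⟨S ∩ B, interFam_inter' hS hB, (charVec_mul' S B).symm⟩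

open Finset Pointwise in
/-- if `𝓕` is `k·φ(p^α)`-wise `p^α`-divisible and `v ∈ V^⟨k⟩` is a
{0,1}-vector, then `p^α` divides the size of the support of `v`.
(Recall `schurPow V (k-1) = V^⟨k⟩`.) -/
theorem statement17 (p n k α : ℕ) [Fact p.Prime] (hα : 0 < α) (hk : 0 < k)
    (𝓕 : Finset (Finset (Fin n)))
    (hdiv : kWiseDiv n (k * Nat.totient (p ^ α)) (p ^ α) 𝓕)
    (V : Submodule (ZMod p) (Fin n → ZMod p))
    (hV : V = Submodule.span (ZMod p) (charVec (ZMod p) '' (𝓕 : Set (Finset (Fin n)))))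
    (v : Fin n → ZMod p) (hv : v ∈ schurPow V (k - 1))
    (h01 : ∀ i, v i = 0 ∨ v i = 1) :
    p ^ α ∣ (Finset.univ.filter (fun i => v i ≠ 0)).card := by
  classical
  subst hV
  have hp : p.Prime := Fact.out
  set e := (p ^ α).totient with he
  haveI : NeZero (p ^ α) := ⟨pow_ne_zero _ hp.pos.ne'⟩
  have hαe : α ≤ e := by
    have h1 : α - 1 < 2 ^ (α - 1) := Nat.lt_two_pow_self
    have h2 : 2 ^ (α - 1) ≤ p ^ (α - 1) := Nat.pow_le_pow_left hp.two_le _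
    have h3 : p ^ (α - 1) ≤ e := by
      rw [he, Nat.totient_prime_pow hp hα]
      exact Nat.le_mul_of_pos_right _ (by have := hp.two_le; omega)
    omega
  -- v lies in the span of characteristic vectors of k-fold intersections
  have hv' : v ∈ Submodule.span (ZMod p)
      (charVec (ZMod p) '' interFam (↑𝓕 : Set (Finset (Fin n))) k) := by
    have h := schurPow_le_span' (K := ZMod p) (↑𝓕 : Set (Finset (Fin n))) (k - 1)
    rw [Nat.sub_add_cancel hk] at h
    exact h hv
  obtain ⟨N, c, g, hsum⟩ := mem_span_set'.1 hv'
  have hIex : ∀ j : Fin N, ∃ I : Finset (Fin n),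
      I ∈ interFam (↑𝓕 : Set (Finset (Fin n))) k ∧
      charVec (ZMod p) I = (g j : Fin n → ZMod p) := fun j => by
    rcases (g j).2 with ⟨I, hI, hEq⟩; exact ⟨I, hI, hEq⟩
  choose I hImem hIeq using hIex
  set m : Fin N → ℤ := fun j => ((c j).val : ℤ) with hm
  have hmc : ∀ j, ((m j : ℤ) : ZMod p) = c j := by
    intro j
    show ((((c j).val : ℕ) : ℤ) : ZMod p) = c j
    rw [Int.cast_natCast, ZMod.natCast_val, ZMod.cast_id]
  set w : Fin n → ℤ := fun i => ∑ j, m j * charVec ℤ (I j) i with hw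
  have hwv : ∀ i, ((w i : ℤ) : ZMod p) = v i := by
    intro i
    have hvi : v i = ∑ j, c j * charVec (ZMod p) (I j) i := by
      rw [← hsum]
      rw [Finset.sum_apply]
      exact Finset.sum_congr rfl fun j _ => by rw [Pi.smul_apply, smul_eq_mul, hIeq]
    rw [hvi, hw]
    push_cast
    refine Finset.sum_congr rfl fun j _ => ?_
    rw [hmc]
    congr 1
    simp [charVec, apply_ite (Int.cast : ℤ → ZMod p)]
  -- product of characteristic vectors
  have prodCV : ∀ (gg : Fin e → Fin N) (i : Fin n),
      (∏ t : Fin e, charVec ℤ (I (gg t)) i)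
        = charVec ℤ (Finset.univ.inf fun t => I (gg t)) i := by
    intro gg i
    simp [charVec, Finset.prod_boole, Finset.mem_inf]
  -- divisibility of each intersection cardinality
  have hcard : ∀ gg : Fin e → Fin N,
      ((p : ℤ) ^ α) ∣ (((Finset.univ.inf fun t => I (gg t)).card : ℤ)) := by
    intro gg
    have hIm := fun t => hImem (gg t)
    choose f hf hfe using hIm
    set σ : Fin (k * e) ≃ Fin e × Fin k :=
      (finCongr (Nat.mul_comm k e)).trans finProdFinEquiv.symm with hσ
    have hd := hdiv (fun j => f (σ j).1 (σ j).2) (fun j => hf _ _)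
    have hinf : Finset.univ.inf (fun j : Fin (k * e) => f (σ j).1 (σ j).2)
        = Finset.univ.inf fun t => I (gg t) := by
      have h1 : (fun j : Fin (k * e) => f (σ j).1 (σ j).2)
          = (fun q : Fin e × Fin k => f q.1 q.2) ∘ σ := rfl
      rw [h1, inf_comp_equiv', ← Finset.univ_product_univ, Finset.inf_product_left]
      exact Finset.inf_congr rfl fun t _ => (hfe t).symm
    rw [hinf] at hd
    exact_mod_cast hd
  -- the key integer sum is divisible by p^α
  have hdvdS : ((p : ℤ) ^ α) ∣ ∑ i, (w i) ^ e := by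
    have expand : ∀ i, (w i) ^ e
        = ∑ gg ∈ Fintype.piFinset (fun _ : Fin e => (Finset.univ : Finset (Fin N))),
            ∏ t : Fin e, (m (gg t) * charVec ℤ (I (gg t)) i) := by
      intro i
      calc (w i) ^ e = ∏ _t : Fin e, ∑ j : Fin N, m j * charVec ℤ (I j) i := by
            simp [hw, Finset.prod_const]
        _ = _ := Finset.prod_univ_sum _ _
    have step : ∑ i, (w i) ^ e
        = ∑ gg ∈ Fintype.piFinset (fun _ : Fin e => (Finset.univ : Finset (Fin N))),
            (∏ t : Fin e, m (gg t)) * ((Finset.univ.inf fun t => I (gg t)).card : ℤ) := by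
      rw [Finset.sum_congr rfl fun i _ => expand i, Finset.sum_comm]
      refine Finset.sum_congr rfl fun gg _ => ?_
      calc ∑ i, ∏ t : Fin e, (m (gg t) * charVec ℤ (I (gg t)) i)
          = ∑ i, (∏ t : Fin e, m (gg t)) * ∏ t : Fin e, charVec ℤ (I (gg t)) i :=
            Finset.sum_congr rfl fun i _ => Finset.prod_mul_distrib
        _ = (∏ t : Fin e, m (gg t))
              * ∑ i, charVec ℤ (Finset.univ.inf fun t => I (gg t)) i := by
            rw [Finset.mul_sum]
            exact Finset.sum_congr rfl fun i _ => by rw [prodCV]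
        _ = (∏ t : Fin e, m (gg t)) * ((Finset.univ.inf fun t => I (gg t)).card : ℤ) := by
            congr 1
            simp [charVec, Finset.sum_boole, Finset.filter_univ_mem]
    rw [step]
    exact Finset.dvd_sum fun gg _ => Dvd.dvd.mul_left (hcard gg) _
  -- pointwise evaluation mod p^α
  have hmod : ((∑ i, (w i) ^ e : ℤ) : ZMod (p ^ α))
      = ((Finset.univ.filter (fun i => v i ≠ 0)).card : ZMod (p ^ α)) := by
    rw [← Finset.sum_boole (fun i => v i ≠ 0) Finset.univ]
    push_cast
    refine Finset.sum_congr rfl fun i _ => ?_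
    rcases h01 i with h0 | h1
    · have hdp : (p : ℤ) ∣ w i :=
        (ZMod.intCast_zmod_eq_zero_iff_dvd _ _).1 (by rw [hwv i, h0])
      obtain ⟨t, ht⟩ := hdp
      have hpz : ((p : ZMod (p ^ α))) ^ e = 0 := by
        have h := (ZMod.natCast_eq_zero_iff (p ^ e) (p ^ α)).2 (pow_dvd_pow p hαe)
        push_cast at h
        exact h
      rw [if_neg (by simp [h0])]
      rw [ht]
      push_cast
      rw [mul_pow, hpz, zero_mul]
    · have hnd : ¬ (p : ℤ) ∣ w i := by
        intro hd
        have h := (ZMod.intCast_zmod_eq_zero_iff_dvd (w i) p).2 hd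
        rw [hwv i, h1] at h
        exact one_ne_zero h
      have hcop : IsCoprime ((p : ℤ) ^ α) (w i) :=
        (((Nat.prime_iff_prime_int.1 hp).coprime_iff_not_dvd).2 hnd).pow_left
      obtain ⟨a, b, hab⟩ := hcop
      have hunit : IsUnit ((w i : ℤ) : ZMod (p ^ α)) := by
        have h := congrArg (Int.cast : ℤ → ZMod (p ^ α)) hab
        push_cast at h
        have hz : ((p : ZMod (p ^ α))) ^ α = 0 := by
          have h2 : ((p ^ α : ℕ) : ZMod (p ^ α)) = 0 := ZMod.natCast_self _
          push_cast at h2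
          exact h2
        rw [hz, mul_zero, zero_add] at h
        exact IsUnit.of_mul_eq_one _ (by rw [mul_comm]; exact h)
      obtain ⟨u, hu⟩ := hunit
      have hue := ZMod.pow_totient u
      rw [if_pos (by simp [h1])]
      rw [← hu, ← Units.val_pow_eq_pow_val, hue, Units.val_one]
  have h0 : ((Finset.univ.filter (fun i => v i ≠ 0)).card : ZMod (p ^ α)) = 0 := by
    rw [← hmod]
    refine (ZMod.intCast_zmod_eq_zero_iff_dvd _ _).2 ?_
    exact_mod_cast hdvdS
  exact (ZMod.natCast_eq_zero_iff _ _).1 h0
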